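/- For every continuous function g : ℝ → ℝ, the map s ↦ ∫_{−1}^{1} log|t − s| · g(t) dt is continuous on ℝ (in particular at every s ∈ [−1, 1], where the integrand is singular). -/

import Mathlib

open Real MeasureTheory intervalIntegral Set Filter

/-- `log` is interval integrable on `[0,1]` despite the singularity at `0`. -/
lemma intervalIntegrable_log01 : IntervalIntegrable Real.log volume 0 1 := by
  have hrp : IntervalIntegrable (fun x : ℝ => 2 * x ^ (-(1:ℝ)/2)) volume 0 1 :=
    (intervalIntegrable_rpow' (by norm_num)).const_mul 2
  apply hrp.mono_fun' Real.measurable_log.aestronglyMeasurable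
  rw [uIoc_of_le (by norm_num : (0:ℝ) ≤ 1)]
  filter_upwards [ae_restrict_mem measurableSet_Ioc] with x hx
  have hx0 : 0 < x := hx.1
  have hxr : (0:ℝ) < x ^ (-(1:ℝ)/2) := Real.rpow_pos_of_pos hx0 _
  have h1 : (-(1:ℝ)/2) * Real.log x ≤ x ^ (-(1:ℝ)/2) := by
    calc (-(1:ℝ)/2) * Real.log x = Real.log (x ^ (-(1:ℝ)/2)) := (Real.log_rpow hx0 _).symm
      _ ≤ x ^ (-(1:ℝ)/2) - 1 := Real.log_le_sub_one_of_pos hxr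
      _ ≤ x ^ (-(1:ℝ)/2) := by linarith
  have hlog0 : Real.log x ≤ 0 := Real.log_nonpos hx0.le hx.2
  have hnorm : ‖Real.log x‖ = -Real.log x := by
    rw [Real.norm_eq_abs, abs_of_nonpos hlog0]
  rw [hnorm]
  nlinarith [hxr.le]

/-- `log` is interval integrable on every interval. -/
lemma intervalIntegrable_log_any (a b : ℝ) :
    IntervalIntegrable Real.log volume a b := by
  suffices h : ∀ c : ℝ, IntervalIntegrable Real.log volume 0 c by
    exact (h a).symm.trans (h b)
  have hpos : ∀ c : ℝ, 0 ≤ c → IntervalIntegrable Real.log volume 0 c := by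
    intro c hc
    rcases le_total c 1 with h1 | h1
    · apply intervalIntegrable_log01.mono_set
      rw [uIcc_of_le hc, uIcc_of_le (by norm_num : (0:ℝ) ≤ 1)]
      exact Icc_subset_Icc le_rfl h1
    · refine intervalIntegrable_log01.trans (intervalIntegrable_log ?_)
      rw [uIcc_of_le h1]
      intro h0
      have : (0:ℝ) < 1 := by norm_num
      linarith [h0.1]
  intro c
  rcases le_total 0 c with hc | hc
  · exact hpos c hc
  · have h0 : IntervalIntegrable Real.log volume 0 (-c) := hpos _ (by linarith)
    have h1 := (IntervalIntegrable.iff_comp_neg (by simp)).mp h0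
    simp only [Real.log_neg_eq_log, neg_zero, neg_neg] at h1
    exact h1

/-- Primitive computation: `∫₀ᶜ log = c log c - c` for `c ≥ 0`. -/
lemma integral_log_zero_right {c : ℝ} (hc : 0 ≤ c) :
    ∫ x in (0:ℝ)..c, Real.log x = c * Real.log c - c := by
  rcases hc.eq_or_lt with h | h
  · simp [← h]
  · have key := intervalIntegral.integral_eq_sub_of_hasDerivAt_of_le
      (f := fun x => x * Real.log x - x) (f' := Real.log) h.le
      ((Real.continuous_mul_log.sub continuous_id).continuousOn)
      (by
        intro x hx
        have h1 := Real.hasDerivAt_mul_log (ne_of_gt hx.1)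
        have h2 := h1.sub (hasDerivAt_id x)
        simpa [Pi.sub_def] using h2)
      (intervalIntegrable_log_any 0 c)
    simpa using key

/-- For a continuous density `g`, the weakly singular integral
`∫_{-1}^{1} log|t - s| g(t) dt` depends continuously on the source
parameter `s`. -/
theorem continuous_log_kernel_integral (g : ℝ → ℝ) (hg : Continuous g) :
    Continuous fun s : ℝ => ∫ t in (-1:ℝ)..1, Real.log |t - s| * g t := by
  simp only [Real.log_abs]
  obtain ⟨M, hM⟩ := (isCompact_Icc (a := (-1:ℝ)) (b := 1)).exists_bound_of_continuousOn
    hg.continuousOn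
  have hM0 : 0 ≤ M := le_trans (norm_nonneg _) (hM (-1) (by norm_num))
  set K : ℝ → ℝ → ℝ := fun ε u => Real.log (max |u| ε) with hK
  have hKcont : ∀ ε : ℝ, 0 < ε → Continuous (K ε) := by
    intro ε hε
    exact (continuous_abs.max continuous_const).log
      (fun u => (lt_of_lt_of_le hε (le_max_right _ _)).ne')
  -- key uniform estimate
  have key : ∀ ε : ℝ, 0 < ε → ∀ s : ℝ,
      |(∫ t in (-1:ℝ)..1, Real.log (t - s) * g t) -
        ∫ t in (-1:ℝ)..1, K ε (t - s) * g t| ≤ 2 * ε * M := by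
    intro ε hε s
    set d : ℝ → ℝ := fun u => K ε u - Real.log u with hd
    have hKc : Continuous (K ε) := hKcont ε hε
    have hlogint : IntervalIntegrable (fun t => Real.log (t - s)) volume (-1) 1 := by
      have h := (intervalIntegrable_log_any (-1 - s) (1 - s)).comp_sub_right s
      simpa using h
    have h1 : IntervalIntegrable (fun t => Real.log (t - s) * g t) volume (-1) 1 :=
      hlogint.mul_continuousOn hg.continuousOn
    have h2 : IntervalIntegrable (fun t => K ε (t - s) * g t) volume (-1) 1 :=
      ((hKc.comp (continuous_sub_right s)).mul hg).intervalIntegrable _ _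
    have hdint : IntervalIntegrable (fun t => d (t - s)) volume (-1) 1 :=
      ((hKc.comp (continuous_sub_right s)).intervalIntegrable _ _).sub hlogint
    have hne : ∀ᵐ t ∂(volume.restrict (Icc (-1:ℝ) 1)), t ≠ s := by
      apply ae_restrict_of_ae
      rw [ae_iff]
      have hset : {t : ℝ | ¬ t ≠ s} = {s} := by ext t; simp
      rw [hset]
      exact measure_singleton s
    have habs : ∀ t : ℝ, t ∈ Icc (-1:ℝ) 1 → t ≠ s →
        |Real.log (t - s) * g t - K ε (t - s) * g t| ≤ d (t - s) * M := by
      intro t ht hts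
      have hpos : 0 < |t - s| := abs_pos.2 (sub_ne_zero.2 hts)
      have hlle : Real.log (t - s) ≤ K ε (t - s) := by
        rw [← Real.log_abs (t - s)]
        exact Real.log_le_log hpos (le_max_left _ _)
      have heq : |Real.log (t - s) * g t - K ε (t - s) * g t|
          = (K ε (t - s) - Real.log (t - s)) * |g t| := by
        rw [← sub_mul, abs_mul, abs_of_nonpos (by linarith)]
        ring
      rw [heq]
      have hgle : |g t| ≤ M := by simpa [Real.norm_eq_abs] using hM t ht
      exact mul_le_mul_of_nonneg_left hgle (by linarith)
    -- d vanishes outside (-ε, ε]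
    have hzero : ∀ u : ℝ, u ∉ Ioc (-ε) ε → d u = 0 := by
      intro u hu
      have hue : ε ≤ |u| := by
        rcases lt_or_ge ε u with h | h
        · rw [abs_of_pos (hε.trans h)]; exact h.le
        · have h2 : u ≤ -ε := by
            by_contra hcon
            exact hu ⟨lt_of_not_ge hcon, h⟩
          rw [abs_of_nonpos (by linarith)]; linarith
      simp only [hd, hK]
      rw [max_eq_left hue, Real.log_abs]
      ring
    have hindic : d = Set.indicator (Ioc (-ε) ε) d := by
      funext u
      by_cases hu : u ∈ Ioc (-ε) ε
      · rw [Set.indicator_of_mem hu]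
      · rw [Set.indicator_of_notMem hu, hzero u hu]
    have hIntOn : IntegrableOn d (Ioc (-ε) ε) volume :=
      ((hKc.intervalIntegrable (-ε) ε).sub (intervalIntegrable_log_any (-ε) ε)).1
    have hInt : Integrable d volume := by
      rw [hindic, integrable_indicator_iff measurableSet_Ioc]
      exact hIntOn
    have hd_nonneg : 0 ≤ᵐ[volume] d := by
      have hae : ∀ᵐ u : ℝ ∂volume, u ≠ 0 := by
        rw [ae_iff]
        have hset : {u : ℝ | ¬ u ≠ 0} = {0} := by ext u; simp
        rw [hset]
        exact measure_singleton 0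
      filter_upwards [hae] with u hu
      have hpos : 0 < |u| := abs_pos.2 hu
      have : Real.log u ≤ K ε u := by
        rw [← Real.log_abs u]
        exact Real.log_le_log hpos (le_max_left _ _)
      simp only [hd, Pi.zero_apply]
      linarith
    have htotal : ∫ u, d u = 2 * ε := by
      have heq1 : ∫ u, d u = ∫ u in Ioc (-ε) ε, d u := by
        conv_lhs => rw [hindic]
        rw [MeasureTheory.integral_indicator measurableSet_Ioc]
      rw [heq1, ← intervalIntegral.integral_of_le (by linarith : -ε ≤ ε)]
      have hsub : ∫ u in (-ε)..ε, d u
          = (∫ u in (-ε)..ε, K ε u) - ∫ u in (-ε)..ε, Real.log u :=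
         intervalIntegral.integral_sub (hKc.intervalIntegrable _ _)
           (intervalIntegrable_log_any _ _)
      have hKval : ∫ u in (-ε)..ε, K ε u = 2 * ε * Real.log ε := by
        have hcongr : EqOn (K ε) (fun _ => Real.log ε) (Set.uIcc (-ε) ε) := by
          intro u hu
          rw [uIcc_of_le (by linarith)] at hu
          have habs : |u| ≤ ε := abs_le.2 ⟨hu.1, hu.2⟩
          simp only [hK]
          rw [max_eq_right habs]
        rw [intervalIntegral.integral_congr hcongr]
        simp only [intervalIntegral.integral_const, smul_eq_mul]
        ring
      have hlogval : ∫ u in (-ε)..ε, Real.log u = 2 * (ε * Real.log ε - ε) := by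
        have hsplit : (∫ u in (-ε)..(0:ℝ), Real.log u) + ∫ u in (0:ℝ)..ε, Real.log u
            = ∫ u in (-ε)..ε, Real.log u :=
          intervalIntegral.integral_add_adjacent_intervals
            (intervalIntegrable_log_any _ _) (intervalIntegrable_log_any _ _)
        have hneg : ∫ u in (-ε)..(0:ℝ), Real.log u = ε * Real.log ε - ε := by
          have hcn : ∫ x in (0:ℝ)..ε, Real.log (-x) = ∫ x in (-ε)..(0:ℝ), Real.log x := by
            simpa using intervalIntegral.integral_comp_neg (a := (0:ℝ)) (b := ε)
              (f := Real.log)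
          rw [← hcn]
          simp only [Real.log_neg_eq_log]
          exact integral_log_zero_right hε.le
        rw [← hsplit, hneg, integral_log_zero_right hε.le]; ring
      rw [hsub, hKval, hlogval]; ring
    have hmono : ∫ t in (-1:ℝ)..1, |Real.log (t - s) * g t - K ε (t - s) * g t|
        ≤ ∫ t in (-1:ℝ)..1, d (t - s) * M := by
      apply intervalIntegral.integral_mono_ae_restrict (by norm_num : (-1:ℝ) ≤ 1)
        ((h1.sub h2).abs) (hdint.mul_const M)
      filter_upwards [ae_restrict_mem measurableSet_Icc, hne] with t ht hts
      exact habs t ht hts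
    have hdb : ∫ t in (-1:ℝ)..1, d (t - s) ≤ 2 * ε := by
      have hcomp : ∫ t in (-1:ℝ)..1, d (t - s) = ∫ u in (-1 - s)..(1 - s), d u := by
        exact intervalIntegral.integral_comp_sub_right (f := d) (a := (-1:ℝ)) (b := 1) s
      rw [hcomp, intervalIntegral.integral_of_le (by linarith : -1 - s ≤ 1 - s)]
      calc ∫ u in Ioc (-1 - s) (1 - s), d u ≤ ∫ u, d u :=
            setIntegral_le_integral hInt hd_nonneg
        _ = 2 * ε := htotal
    calc |(∫ t in (-1:ℝ)..1, Real.log (t - s) * g t) -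
            ∫ t in (-1:ℝ)..1, K ε (t - s) * g t|
        = |∫ t in (-1:ℝ)..1, (Real.log (t - s) * g t - K ε (t - s) * g t)| := by
          rw [intervalIntegral.integral_sub h1 h2]
      _ ≤ ∫ t in (-1:ℝ)..1, |Real.log (t - s) * g t - K ε (t - s) * g t| :=
          intervalIntegral.abs_integral_le_integral_abs (by norm_num)
      _ ≤ ∫ t in (-1:ℝ)..1, d (t - s) * M := hmono
      _ = (∫ t in (-1:ℝ)..1, d (t - s)) * M := by
          rw [intervalIntegral.integral_mul_const]
      _ ≤ 2 * ε * M := mul_le_mul_of_nonneg_right hdb hM0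
  -- approximating continuous family
  set Fn : ℕ → ℝ → ℝ :=
    fun n s => ∫ t in (-1:ℝ)..1, K (1 / (n + 1)) (t - s) * g t with hFn
  have hεn : ∀ n : ℕ, (0:ℝ) < 1 / (n + 1) := fun n => by positivity
  have hFncont : ∀ n, Continuous (Fn n) := by
    intro n
    have hjoint :
        Continuous (Function.uncurry fun (s : ℝ) (t : ℝ) => K (1 / (n + 1)) (t - s) * g t) :=
      (((hKcont _ (hεn n)).comp (continuous_snd.sub continuous_fst)).mul
        (hg.comp continuous_snd))
    exact continuous_parametric_intervalIntegral_of_continuous' hjoint _ _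
  have htu : TendstoUniformly Fn
      (fun s => ∫ t in (-1:ℝ)..1, Real.log (t - s) * g t) atTop := by
    rw [Metric.tendstoUniformly_iff]
    intro δ hδ
    have hseq : Tendsto (fun n : ℕ => 2 * (1 / (n + 1 : ℝ)) * M) atTop (nhds 0) := by
      have h0 := tendsto_one_div_add_atTop_nhds_zero_nat (𝕜 := ℝ)
      have h1 := (h0.const_mul 2).mul_const M
      simpa using h1
    filter_upwards [hseq.eventually_lt_const hδ] with n hn s
    rw [Real.dist_eq]
    exact lt_of_le_of_lt (key _ (hεn n) s) hn
  exact htu.continuous (Frequently.of_forall hFncont)
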